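/- Let d ≥ 1 and let N be the d×d integer matrix with entries N(i,i+1) = 1 and all other entries 0, inducing the unipotent torus automorphism A = I + N of 𝕋^{d} = (ℝ/ℤ)^{d}. If a sequence (c_n) of complex numbers is linearly disjoint from the dynamical system (𝕋^{d}, T_b) for every b ∈ 𝕋^{d}, where T_b x = A x + b, then (c_n) is oscillating of order d. -/

import Mathlib

open Filter Finset

open Polynomial in
private lemma natDegree_taylor_sub_le' (Q : Polynomial ℝ) (m : ℕ) (h : Q.natDegree ≤ m + 1) :
    (taylor 1 Q - Q).natDegree ≤ m := by
  rw [natDegree_le_iff_coeff_eq_zero]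
  intro k hk
  rw [coeff_sub, taylor_coeff]
  rcases lt_or_ge Q.natDegree k with hlt | hle
  · rw [coeff_eq_zero_of_natDegree_lt hlt, sub_zero]
    have hC : Polynomial.hasseDeriv k Q = 0 := by
      ext n
      rw [Polynomial.hasseDeriv_coeff, coeff_eq_zero_of_natDegree_lt (by omega), mul_zero,
        coeff_zero]
    simp [hC]
  · have hC : Polynomial.hasseDeriv k Q = Polynomial.C (Q.coeff k) := by
      ext n
      rw [Polynomial.hasseDeriv_coeff, Polynomial.coeff_C]
      rcases Nat.eq_zero_or_pos n with h0 | h0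
      · subst h0; simp
      · have hz : Q.coeff (n + k) = 0 := coeff_eq_zero_of_natDegree_lt (by omega)
        simp [hz, Nat.pos_iff_ne_zero.mp h0]
    rw [hC, eval_C, sub_self]

private lemma sum_step' (d : ℕ)
    (N : Matrix (Fin d) (Fin d) ℤ)
    (hN : ∀ i j : Fin d, N i j = if (j : ℕ) = (i : ℕ) + 1 then 1 else 0)
    (A : Matrix (Fin d) (Fin d) ℤ) (hA : A = 1 + N)
    (y : Fin d → AddCircle (1:ℝ)) (i : Fin d) :
    ∑ j, A i j • y j
      = y i + (if h : (i:ℕ) + 1 < d then y ⟨(i:ℕ)+1, h⟩ else 0) := by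
  have : ∀ j, A i j • y j
      = (if i = j then y j else 0) + (if (j:ℕ) = (i:ℕ)+1 then y j else 0) := by
    intro j
    rw [hA, Matrix.add_apply, Matrix.one_apply, hN, add_smul]
    congr 1 <;> split <;> simp
  rw [Finset.sum_congr rfl fun j _ => this j, Finset.sum_add_distrib,
    Finset.sum_ite_eq Finset.univ i y, if_pos (Finset.mem_univ i)]
  congr 1
  split
  · next h =>
    have : ∀ j : Fin d, ((j:ℕ) = (i:ℕ)+1) = (j = (⟨(i:ℕ)+1, h⟩ : Fin d)) := by
      intro j; simp [Fin.ext_iff]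
    simp_rw [this]
    rw [Finset.sum_ite_eq' Finset.univ _ y, if_pos (Finset.mem_univ _)]
  · next h =>
    apply Finset.sum_eq_zero
    intro j _
    rw [if_neg]
    omega

/-- A sequence `(c n)` of complex numbers is oscillating of order `d`. -/
def OscillatingOfOrder (c : ℕ → ℂ) (d : ℕ) : Prop :=
  ∀ P : Polynomial ℝ, P.natDegree ≤ d →
    Tendsto (fun N : ℕ =>
        (N : ℂ)⁻¹ * ∑ n ∈ Finset.range N,
          c n * Complex.exp (2 * Real.pi * Complex.I * (P.eval (n : ℝ))))
      atTop (nhds 0)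

theorem oscillating_of_disjoint_from_special_affine_maps
    (d : ℕ) (hd : 1 ≤ d)
    (N : Matrix (Fin d) (Fin d) ℤ)
    (hN : ∀ i j : Fin d, N i j = if (j : ℕ) = (i : ℕ) + 1 then 1 else 0)
    (A : Matrix (Fin d) (Fin d) ℤ) (hA : A = 1 + N)
    (Amap : (Fin d → AddCircle (1 : ℝ)) → (Fin d → AddCircle (1 : ℝ)))
    (hAmap : ∀ x i, Amap x i = ∑ j, A i j • x j)
    (c : ℕ → ℂ)
    (hdisj : ∀ b : Fin d → AddCircle (1 : ℝ),
      ∀ x : Fin d → AddCircle (1 : ℝ),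
        ∀ f : (Fin d → AddCircle (1 : ℝ)) → ℂ, Continuous f →
          Tendsto (fun Nn : ℕ =>
              (Nn : ℂ)⁻¹ * ∑ n ∈ Finset.range Nn,
                c n * f ((fun z => Amap z + b)^[n] x))
            atTop (nhds 0)) :
    OscillatingOfOrder c d := by
  intro P hP
  classical
  -- iterated forward differences of P
  set D : ℕ → Polynomial ℝ := fun i => (fun Q => Polynomial.taylor 1 Q - Q)^[i] P with hD
  have hD0 : D 0 = P := rfl
  have hDsucc : ∀ i, D (i + 1) = Polynomial.taylor 1 (D i) - D i := fun i =>
    Function.iterate_succ_apply' _ i P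
  have hDdeg : ∀ i, (D i).natDegree ≤ d - i := by
    intro i
    induction i with
    | zero => simpa [hD0] using hP
    | succ i ih =>
      rw [hDsucc]
      exact natDegree_taylor_sub_le' (D i) (d - (i + 1)) (le_trans ih (by omega))
  have hconst : ∀ r : ℝ, (D d).eval r = (D d).eval 0 := by
    intro r
    have h0 : (D d).natDegree ≤ 0 := by simpa using hDdeg d
    rw [Polynomial.eq_C_of_natDegree_le_zero h0]
    simp
  have hrec : ∀ (i : ℕ) (r : ℝ), (D i).eval (r + 1) = (D i).eval r + (D (i + 1)).eval r := by
    intro i r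
    rw [hDsucc, Polynomial.eval_sub, Polynomial.taylor_eval]
    ring
  -- the point and the translation
  set x0 : Fin d → AddCircle (1 : ℝ) := fun i => (((D (i : ℕ)).eval 0 : ℝ) : AddCircle (1 : ℝ))
    with hx0
  set b : Fin d → AddCircle (1 : ℝ) := fun i =>
    if (i : ℕ) + 1 = d then (((D d).eval 0 : ℝ) : AddCircle (1 : ℝ)) else 0 with hb
  have key : ∀ (y : Fin d → AddCircle (1 : ℝ)) (i : Fin d),
      (Amap y + b) i = y i + (if h : (i : ℕ) + 1 < d then y ⟨(i : ℕ) + 1, h⟩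
        else (((D d).eval 0 : ℝ) : AddCircle (1 : ℝ))) := by
    intro y i
    rw [Pi.add_apply, hAmap, sum_step' d N hN A hA y i]
    by_cases h : (i : ℕ) + 1 < d
    · rw [dif_pos h, dif_pos h, hb]
      simp only [show ¬((i : ℕ) + 1 = d) by omega, if_false, add_zero, add_assoc, zero_add]
    · rw [dif_neg h, dif_neg h, hb]
      have : (i : ℕ) + 1 = d := by have := i.isLt; omega
      simp only [this, if_true, add_zero, add_assoc, zero_add]
  -- the orbit computation
  have horb : ∀ (n : ℕ) (i : Fin d),
      ((fun z => Amap z + b)^[n] x0) i = (((D (i : ℕ)).eval (n : ℝ) : ℝ) : AddCircle (1 : ℝ)) := by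
    intro n
    induction n with
    | zero => intro i; simp [hx0]
    | succ n ih =>
      intro i
      rw [Function.iterate_succ_apply', key _ i]
      by_cases h : (i : ℕ) + 1 < d
      · rw [dif_pos h, ih, ih]
        rw [← AddCircle.coe_add]
        congr 1
        push_cast
        rw [hrec]
      · rw [dif_neg h, ih]
        have hi : (i : ℕ) + 1 = d := by have := i.isLt; omega
        rw [← AddCircle.coe_add]
        congr 1
        push_cast
        rw [hrec (i : ℕ) (n : ℝ), hi, hconst ((n : ℝ))]
  -- the test function
  set i0 : Fin d := ⟨0, hd⟩ with hi0
  set f : (Fin d → AddCircle (1 : ℝ)) → ℂ :=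
    fun z => ((AddCircle.toCircle (z i0) : Circle) : ℂ) with hf
  have hfc : Continuous f :=
    continuous_subtype_val.comp (AddCircle.continuous_toCircle.comp (continuous_apply i0))
  have H := hdisj b x0 f hfc
  refine H.congr fun Nn => ?_
  congr 1
  refine Finset.sum_congr rfl fun n _ => ?_
  congr 1
  have : f ((fun z => Amap z + b)^[n] x0)
      = ((AddCircle.toCircle ((((P.eval (n : ℝ)) : ℝ) : AddCircle (1 : ℝ))) : Circle) : ℂ) := by
    rw [hf]
    simp only
    rw [horb n i0]
    rfl
  rw [this, AddCircle.toCircle_apply_mk, Circle.coe_exp]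
  congr 1
  push_cast
  ring
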